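/- Let (X, 𝒜, μ) be a complete semi-finite measure space and ℰ ⊆ 𝒜 ∖ 𝒩_μ an almost disjointed 𝒩_μ-generating family with μ(Z) < ∞ for every Z ∈ ℰ. Then for every A ∈ 𝒜 one has μ(A) = ∑_{Z∈ℰ} μ(A ∩ Z), the sum in [0, ∞] of the (possibly uncountable) family ⟨μ(A ∩ Z)⟩_{Z∈ℰ}. -/

import Mathlib

open Set MeasureTheory ENNReal

namespace MSNPaper

variable {X Y : Type*}

/-- `A` is a σ-algebra of subsets of the carrier set `Z`. -/
def IsSigmaAlgebraOn (Z : Set X) (A : Set (Set X)) : Prop :=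
  (∀ s ∈ A, s ⊆ Z) ∧ ∅ ∈ A ∧ (∀ s ∈ A, Z \ s ∈ A) ∧
    ∀ f : ℕ → Set X, (∀ n, f n ∈ A) → (⋃ n, f n) ∈ A

/-- `N` is a σ-ideal of the σ-algebra `A`. -/
def IsSigmaIdeal (A N : Set (Set X)) : Prop :=
  N ⊆ A ∧ ∅ ∈ N ∧ (∀ s ∈ A, ∀ t ∈ N, s ⊆ t → s ∈ N) ∧
    ∀ f : ℕ → Set X, (∀ n, f n ∈ N) → (⋃ n, f n) ∈ N

/-- A measurable space with negligibles (MSN) on the carrier set `Z`. -/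
def IsMSN (Z : Set X) (A N : Set (Set X)) : Prop :=
  IsSigmaAlgebraOn Z A ∧ IsSigmaIdeal A N

/-- The MSN is saturated: every subset of a negligible set is negligible. -/
def Saturated (N : Set (Set X)) : Prop :=
  ∀ s t : Set X, s ⊆ t → t ∈ N → s ∈ N

/-- `U` is an `N`-essential upper bound of the collection `E`. -/
def IsEssUB (N E : Set (Set X)) (U : Set X) : Prop :=
  ∀ e ∈ E, e \ U ∈ N

/-- `S` is an `N`-essential supremum of the collection `E ⊆ A`. -/
def IsEssSup (A N E : Set (Set X)) (S : Set X) : Prop :=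
  S ∈ A ∧ IsEssUB N E S ∧ ∀ U ∈ A, IsEssUB N E U → S \ U ∈ N

/-- Every collection of measurable sets admits an essential supremum. -/
def Localizable (A N : Set (Set X)) : Prop :=
  ∀ E ⊆ A, ∃ S, IsEssSup A N E S

/-- The members of `E` pairwise intersect negligibly. -/
def AlmostDisjointed (N E : Set (Set X)) : Prop :=
  E.Pairwise fun e e' => e ∩ e' ∈ N

/-- Countable chain condition: almost disjointed families of non-negligible
measurable sets are countable. -/
def CCC (A N : Set (Set X)) : Prop :=
  ∀ E : Set (Set X), E ⊆ A → (∀ e ∈ E, e ∉ N) → AlmostDisjointed N E → E.Countable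

/-- Local determination for an MSN with carrier `Z`. -/
def LocallyDetermined (Z : Set X) (A N : Set (Set X)) : Prop :=
  ∀ E ⊆ A, IsEssSup A N E Z → ∀ s ⊆ Z, (∀ e ∈ E, s ∩ e ∈ A) → s ∈ A

/-- Trace of a collection of sets on a subset `Z`. -/
def Sub (A : Set (Set X)) (Z : Set X) : Set (Set X) := (· ∩ Z) '' A


/-- If `E` is an almost disjointed generating family of sets of finite measure in a
complete semi-finite measure space, then the measure of every measurable set is the
sum of the measures of its traces on members of `E`. -/
theorem measure_eq_tsum {X : Type*} [MeasurableSpace X] (μ : Measure X)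
    (hcomplete : ∀ s t : Set X, s ⊆ t → MeasurableSet t → μ t = 0 → MeasurableSet s)
    (hsemifinite : ∀ s : Set X, MeasurableSet s → μ s = ⊤ →
      ∃ t, t ⊆ s ∧ MeasurableSet t ∧ 0 < μ t ∧ μ t < ⊤)
    (E : Set (Set X)) (hEA : ∀ Z ∈ E, MeasurableSet Z)
    (hEN : ∀ Z ∈ E, μ Z ≠ 0) (hEfin : ∀ Z ∈ E, μ Z < ⊤)
    (hdisj : AlmostDisjointed {s : Set X | MeasurableSet s ∧ μ s = 0} E)
    (hgen : IsEssSup {s : Set X | MeasurableSet s}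
      {s : Set X | MeasurableSet s ∧ μ s = 0} E Set.univ)
    (A : Set X) (hA : MeasurableSet A) :
    μ A = ∑' Z : ↥E, μ (A ∩ ↑Z) := by
  obtain ⟨-, hub, hsup⟩ := hgen
  -- lower bound: tsum ≤ μ A
  have hge : ∑' Z : ↥E, μ (A ∩ ↑Z) ≤ μ A := by
    refine Summable.tsum_le_of_sum_le ENNReal.summable fun s => ?_
    have hd : Set.Pairwise (↑s : Set ↥E) (Function.onFun (MeasureTheory.AEDisjoint μ) fun Z : ↥E => A ∩ ↑Z) := by
      intro Z _ Z' _ hne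
      have hZZ' : (Z : Set X) ≠ (Z' : Set X) := fun h => hne (Subtype.ext h)
      have := (hdisj Z.2 Z'.2 hZZ').2
      refine measure_mono_null (fun x hx => ?_) this
      exact ⟨hx.1.2, hx.2.2⟩
    have hm : ∀ Z ∈ s, MeasureTheory.NullMeasurableSet (A ∩ (Z : Set X)) μ :=
      fun Z _ => (hA.inter (hEA Z Z.2)).nullMeasurableSet
    calc ∑ Z ∈ s, μ (A ∩ ↑Z) = μ (⋃ Z ∈ s, A ∩ ↑Z) :=
          (measure_biUnion_finset₀ hd hm).symm
      _ ≤ μ A := measure_mono (by simp [Set.iUnion_subset_iff, Set.inter_subset_left])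
  refine le_antisymm ?_ hge
  -- upper bound
  by_cases htop : ∑' Z : ↥E, μ (A ∩ ↑Z) = ⊤
  · simp [htop]
  -- support is countable
  have hcnt : {Z : ↥E | μ (A ∩ ↑Z) ≠ 0}.Countable := by
    simpa [Function.support] using Summable.countable_support_ennreal htop
  set T : Set ↥E := {Z : ↥E | μ (A ∩ ↑Z) ≠ 0} with hT
  set S : Set X := ⋃ Z ∈ T, (Z : Set X) with hSdef
  have hSmeas : MeasurableSet S := MeasurableSet.biUnion hcnt fun Z _ => hEA Z Z.2
  -- the part of A outside S is null
  have hB0 : μ (A \ S) = 0 := by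
    by_contra hB
    -- every trace of A \ S on a member of E is null
    have hnull : ∀ Z ∈ E, μ ((A \ S) ∩ Z) = 0 := by
      intro Z hZ
      by_cases h0 : μ (A ∩ Z) = 0
      · refine measure_mono_null ?_ h0
        intro x hx; exact ⟨hx.1.1, hx.2⟩
      · have hZS : Z ⊆ S := Set.subset_biUnion_of_mem (u := fun Z : ↥E => (Z : Set X))
          (show (⟨Z, hZ⟩ : ↥E) ∈ T from h0)
        have : (A \ S) ∩ Z = ∅ := by
          ext x; simp only [Set.mem_inter_iff, Set.mem_diff, Set.mem_empty_iff_false,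
            iff_false]
          rintro ⟨⟨-, hxS⟩, hxZ⟩; exact hxS (hZS hxZ)
        simp [this]
    -- get a non-null finite-measure measurable subset F of A \ S
    have hBmeas : MeasurableSet (A \ S) := hA.diff hSmeas
    obtain ⟨F, hFsub, hFmeas, hF0⟩ :
        ∃ F, F ⊆ A \ S ∧ MeasurableSet F ∧ μ F ≠ 0 := by
      by_cases hfin : μ (A \ S) = ⊤
      · obtain ⟨t, ht1, ht2, ht3, -⟩ := hsemifinite _ hBmeas hfin
        exact ⟨t, ht1, ht2, ht3.ne'⟩
      · exact ⟨A \ S, Set.Subset.rfl, hBmeas, hB⟩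
    -- Fᶜ is an essential upper bound of E
    have hEUB : IsEssUB {s : Set X | MeasurableSet s ∧ μ s = 0} E Fᶜ := by
      intro Z hZ
      have hsub : Z \ Fᶜ ⊆ (A \ S) ∩ Z := by
        intro x hx
        have hxF : x ∈ F := by simpa using hx.2
        exact ⟨hFsub hxF, hx.1⟩
      exact ⟨(hEA Z hZ).diff hFmeas.compl, measure_mono_null hsub (hnull Z hZ)⟩
    have := hsup Fᶜ hFmeas.compl hEUB
    have huniv : Set.univ \ Fᶜ = F := by simp
    rw [huniv] at this
    exact hF0 this.2
  -- conclude
  have : μ A ≤ μ (A ∩ S) + μ (A \ S) := measure_le_inter_add_diff μ A S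
  rw [hB0, add_zero] at this
  refine this.trans ?_
  have hAS : A ∩ S = ⋃ Z ∈ T, A ∩ (Z : Set X) := by
    rw [hSdef, Set.inter_iUnion₂]
  calc μ (A ∩ S) = μ (⋃ Z ∈ T, A ∩ (Z : Set X)) := by rw [hAS]
    _ ≤ ∑' Z : T, μ (A ∩ ((Z : ↥E) : Set X)) := measure_biUnion_le μ hcnt _
    _ ≤ ∑' Z : ↥E, μ (A ∩ ↑Z) :=
        ENNReal.tsum_comp_le_tsum_of_injective Subtype.val_injective _

end MSNPaper
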